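/- Let {U_k}_{k>=1} be random variables adapted to a filtration {H_k}, and suppose there exist a constant c > 0 and an integrable random variable U with E[|U| log⁺|U|] < ∞ such that P(|U_k| > x) <= c P(|U| > x) for all x > 0 and all k. Then (1/n) sum_{k=1}^n ( U_k - E[U_k | H_{k-1}] ) → 0 almost surely. -/

import Mathlib

open MeasureTheory Filter
open scoped ENNReal NNReal

section Aux

lemma kron_aux (u : ℕ → ℝ) (n : ℕ) :
    ∑ k ∈ Finset.Icc 1 n, u k
      = n * (∑ k ∈ Finset.Icc 1 n, u k / k) -
        ∑ j ∈ Finset.range n, (∑ k ∈ Finset.Icc 1 j, u k / k) := by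
  induction n with
  | zero => simp
  | succ n ih =>
    rw [Finset.sum_Icc_succ_top (Nat.one_le_iff_ne_zero.mpr (Nat.succ_ne_zero n)), ih,
      Finset.sum_range_succ,
      Finset.sum_Icc_succ_top (Nat.one_le_iff_ne_zero.mpr (Nat.succ_ne_zero n))]
    have h : (n:ℝ) + 1 ≠ 0 := by positivity
    push_cast
    field_simp
    ring

lemma kron {u : ℕ → ℝ} {l : ℝ}
    (h : Tendsto (fun n : ℕ => ∑ k ∈ Finset.Icc 1 n, u k / k) atTop (nhds l)) :
    Tendsto (fun n : ℕ => (n : ℝ)⁻¹ * ∑ k ∈ Finset.Icc 1 n, u k) atTop (nhds 0) := by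
  have hc := h.cesaro
  have h2 : Tendsto (fun n : ℕ => (∑ k ∈ Finset.Icc 1 n, u k / k) -
      (n:ℝ)⁻¹ * ∑ j ∈ Finset.range n, (∑ k ∈ Finset.Icc 1 j, u k / k)) atTop (nhds (l - l)) :=
    h.sub hc
  rw [sub_self] at h2
  apply h2.congr'
  filter_upwards [eventually_ge_atTop 1] with n hn
  have hn' : (n:ℝ) ≠ 0 := by positivity
  rw [kron_aux u n, mul_sub, ← mul_assoc, inv_mul_cancel₀ hn', one_mul]

lemma icc_sum_eq {M : Type*} [AddCommMonoid M] (f : ℕ → M) (n : ℕ) :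
    ∑ k ∈ Finset.range (n+1), f k = f 0 + ∑ k ∈ Finset.Icc 1 n, f k := by
  have h : Finset.range (n+1) = insert 0 (Finset.Icc 1 n) := by
    ext x; simp [Nat.lt_succ_iff]; omega
  rw [h, Finset.sum_insert (by simp)]

lemma kron_of_summable {u : ℕ → ℝ} (hu : Summable fun k => u k / k) :
    Tendsto (fun n : ℕ => (n : ℝ)⁻¹ * ∑ k ∈ Finset.Icc 1 n, u k) atTop (nhds 0) := by
  apply kron (l := (∑' k, u k / k) - u 0 / 0)
  have h1 : Tendsto (fun n : ℕ => ∑ k ∈ Finset.range n, u k / k) atTop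
      (nhds (∑' k, u k / k)) := hu.hasSum.tendsto_sum_nat
  have h2 := (h1.comp (tendsto_add_atTop_nat 1)).sub (tendsto_const_nhds (x := u 0 / 0))
  apply h2.congr
  intro n
  simp only [Function.comp]
  rw [icc_sum_eq (fun k => u k / (k:ℝ)) n]
  push_cast
  ring

lemma lintegral_le_of_tail_le {Ω : Type*} [MeasurableSpace Ω] (μ : Measure Ω) {f g : Ω → ℝ}
    (hf : Measurable f) (hfpos : 0 ≤ f) (hg : Measurable g) (hgpos : 0 ≤ g) {c : ℝ}
    (h : ∀ t : ℝ, 0 < t → μ {ω | t < f ω} ≤ ENNReal.ofReal c * μ {ω | t < g ω}) :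
    ∫⁻ ω, ENNReal.ofReal (f ω) ∂μ ≤ ENNReal.ofReal c * ∫⁻ ω, ENNReal.ofReal (g ω) ∂μ := by
  rw [lintegral_eq_lintegral_meas_lt μ (Filter.Eventually.of_forall hfpos) hf.aemeasurable,
    lintegral_eq_lintegral_meas_lt μ (Filter.Eventually.of_forall hgpos) hg.aemeasurable,
    ← lintegral_const_mul' _ _ ENNReal.ofReal_ne_top]
  exact setLIntegral_mono' measurableSet_Ioi fun t ht => h t ht

lemma sum_inv_le_log (M : ℕ) : ∑ k ∈ Finset.Icc 1 M, (k:ℝ)⁻¹ ≤ 1 + Real.log M := by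
  have h := harmonic_le_one_add_log M
  have hh : (harmonic M : ℝ) = ∑ k ∈ Finset.Icc 1 M, (k:ℝ)⁻¹ := by
    have h2 := icc_sum_eq (fun k => (k:ℝ)⁻¹) M
    rw [Finset.sum_range_succ'] at h2
    simp only [Nat.cast_zero, inv_zero, add_zero, zero_add] at h2
    rw [harmonic]
    push_cast
    rw [← h2]
    exact Finset.sum_congr rfl fun x _ => by push_cast; ring
  linarith

lemma harmonic_tsum_le (w : ℝ) (hw : 0 ≤ w) :
    ∑' k : ℕ, ENNReal.ofReal ((k:ℝ)⁻¹ * (if (k:ℝ)/2 < w then w else 0))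
      ≤ ENNReal.ofReal (w * (3 + max (Real.log w) 0)) := by
  set M := Nat.floor (2*w) with hM
  have hsupp : ∀ k : ℕ, k ∉ Finset.Icc 1 M →
      ENNReal.ofReal ((k:ℝ)⁻¹ * (if (k:ℝ)/2 < w then w else 0)) = 0 := by
    intro k hk
    rcases Nat.eq_zero_or_pos k with h0 | h1
    · simp [h0]
    · have hkM : M < k := by
        simp only [Finset.mem_Icc, not_and, not_le] at hk; exact hk h1
      have h2w : 2*w < k := by
        calc 2*w < M + 1 := Nat.lt_floor_add_one _
        _ ≤ k := by exact_mod_cast hkM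
      have : ¬ ((k:ℝ)/2 < w) := by intro h; linarith
      simp [this]
  have hnn : ∀ k ∈ Finset.Icc 1 M, 0 ≤ (k:ℝ)⁻¹ * (if (k:ℝ)/2 < w then w else 0) := by
    intro k _
    have h1 : (0:ℝ) ≤ (k:ℝ)⁻¹ := by positivity
    split_ifs with h
    · exact mul_nonneg h1 hw
    · simp
  rw [tsum_eq_sum hsupp, ← ENNReal.ofReal_sum_of_nonneg hnn]
  apply ENNReal.ofReal_le_ofReal
  have hb : ∑ k ∈ Finset.Icc 1 M, (k:ℝ)⁻¹ * (if (k:ℝ)/2 < w then w else 0)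
      ≤ ∑ k ∈ Finset.Icc 1 M, (k:ℝ)⁻¹ * w := by
    apply Finset.sum_le_sum
    intro k _
    have h1 : (0:ℝ) ≤ (k:ℝ)⁻¹ := by positivity
    split_ifs with h
    · exact le_refl _
    · simpa using mul_nonneg h1 hw
  rw [← Finset.sum_mul] at hb
  refine hb.trans ?_
  rcases Nat.eq_zero_or_pos M with h0 | h1
  · simp only [h0]
    simp only [Finset.Icc_self, show Finset.Icc 1 0 = (∅ : Finset ℕ) by rfl]
    simp
    positivity
  · have hMle : (M:ℝ) ≤ 2*w := Nat.floor_le (by linarith)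
    have hM1 : (1:ℝ) ≤ M := by exact_mod_cast h1
    have hlog : Real.log M ≤ Real.log 2 + max (Real.log w) 0 := by
      have hw0 : 0 < w := by nlinarith
      calc Real.log M ≤ Real.log (2*w) := Real.log_le_log (by linarith) hMle
      _ = Real.log 2 + Real.log w := Real.log_mul (by norm_num) (ne_of_gt hw0)
      _ ≤ Real.log 2 + max (Real.log w) 0 := by gcongr; exact le_max_left _ _
    have hlog2 : Real.log 2 ≤ 1 := by
      calc Real.log 2 ≤ 2 - 1 := Real.log_le_sub_one_of_pos (by norm_num)
      _ = 1 := by norm_num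
    have hs := sum_inv_le_log M
    have hmax : (0:ℝ) ≤ max (Real.log w) 0 := le_max_right _ _
    calc (∑ k ∈ Finset.Icc 1 M, (k:ℝ)⁻¹) * w ≤ (1 + Real.log M) * w := by
          apply mul_le_mul_of_nonneg_right hs hw
    _ ≤ (3 + max (Real.log w) 0) * w := by nlinarith
    _ = w * (3 + max (Real.log w) 0) := by ring

lemma var_sum_le (w : ℝ) (hw : 0 ≤ w) (n : ℕ) :
    ∑ k ∈ Finset.range n, ((k:ℝ)⁻¹)^2 * (min w k)^2 ≤ 3*w + 2 := by
  set M := Nat.floor w with hM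
  have hMw : (M:ℝ) ≤ w := Nat.floor_le hw
  have hwM : w < M + 1 := Nat.lt_floor_add_one _
  have hbnd : ∀ k : ℕ, ((k:ℝ)⁻¹)^2 * (min w k)^2 ≤
      (if 1 ≤ k ∧ k ≤ M then (1:ℝ) else 0) + w^2 * ((k:ℝ)^2)⁻¹ * (if M < k then 1 else 0) := by
    intro k
    rcases Nat.eq_zero_or_pos k with h0 | h1
    · subst h0
      have hz : ((0:ℕ):ℝ)⁻¹ ^ 2 * (min w ((0:ℕ):ℝ))^2 = 0 := by norm_num
      rw [hz]
      split_ifs <;> positivity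
    · have hk0 : (0:ℝ) < k := by exact_mod_cast h1
      rcases le_or_gt k M with hkM | hMk
      · have hkw : (k:ℝ) ≤ w := le_trans (by exact_mod_cast hkM) hMw
        rw [min_eq_right hkw]
        have he : ((k:ℝ)⁻¹)^2 * (k:ℝ)^2 = 1 := by field_simp
        rw [he]
        have hh : (1 ≤ k ∧ k ≤ M) := ⟨h1, hkM⟩
        simp [hh, not_lt.mpr hkM]
      · have h2 : min w (k:ℝ) ≤ w := min_le_left _ _
        have h3 : (0:ℝ) ≤ min w k := le_min hw hk0.le
        have h4 : (min w (k:ℝ))^2 ≤ w^2 := by nlinarith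
        have h5 : ¬(1 ≤ k ∧ k ≤ M) := by omega
        simp only [h5, if_false, hMk, if_true, zero_add, mul_one]
        calc ((k:ℝ)⁻¹)^2 * (min w k)^2 ≤ ((k:ℝ)⁻¹)^2 * w^2 :=
              mul_le_mul_of_nonneg_left h4 (by positivity)
        _ = w^2 * ((k:ℝ)^2)⁻¹ := by rw [← inv_pow]; ring
  calc ∑ k ∈ Finset.range n, ((k:ℝ)⁻¹)^2 * (min w k)^2
      ≤ ∑ k ∈ Finset.range n, ((if 1 ≤ k ∧ k ≤ M then (1:ℝ) else 0)
          + w^2 * ((k:ℝ)^2)⁻¹ * (if M < k then 1 else 0)) :=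
        Finset.sum_le_sum fun k _ => hbnd k
  _ = (∑ k ∈ Finset.range n, (if 1 ≤ k ∧ k ≤ M then (1:ℝ) else 0))
      + ∑ k ∈ Finset.range n, w^2 * ((k:ℝ)^2)⁻¹ * (if M < k then 1 else 0) :=
        Finset.sum_add_distrib
  _ ≤ M + w^2 * (2 / (M+1)) := by
      gcongr
      · calc ∑ k ∈ Finset.range n, (if 1 ≤ k ∧ k ≤ M then (1:ℝ) else 0)
            = ∑ k ∈ (Finset.range n).filter (fun k => 1 ≤ k ∧ k ≤ M), (1:ℝ) := by
              rw [Finset.sum_filter]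
        _ ≤ ∑ k ∈ Finset.Icc 1 M, (1:ℝ) := by
              apply Finset.sum_le_sum_of_subset_of_nonneg
              · intro k hk
                simp only [Finset.mem_filter, Finset.mem_range] at hk
                simp only [Finset.mem_Icc]
                exact hk.2
              · intros; norm_num
        _ = M := by simp
      · calc ∑ k ∈ Finset.range n, w^2 * ((k:ℝ)^2)⁻¹ * (if M < k then 1 else 0)
            = w^2 * ∑ k ∈ Finset.range n, ((k:ℝ)^2)⁻¹ * (if M < k then 1 else 0) := by
              rw [Finset.mul_sum]; exact Finset.sum_congr rfl fun k _ => by ring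
        _ = w^2 * ∑ k ∈ (Finset.range n).filter (fun k => M < k), ((k:ℝ)^2)⁻¹ := by
              rw [Finset.sum_filter]
              congr 1
              exact Finset.sum_congr rfl fun k _ => by split_ifs <;> ring
        _ = w^2 * ∑ k ∈ Finset.Ioo M n, (((k:ℕ):ℝ)^2)⁻¹ := by
              congr 2
              ext k; simp [Finset.mem_Ioo, Finset.mem_filter, Finset.mem_range]; omega
        _ ≤ w^2 * (2 / (M+1)) := by
              apply mul_le_mul_of_nonneg_left _ (by positivity)
              have := sum_Ioo_inv_sq_le (α := ℝ) M n
              convert this using 2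
  _ ≤ 3*w + 2 := by
      rcases Nat.eq_zero_or_pos M with h0 | h1
      · rw [h0] at hwM ⊢
        push_cast at hwM ⊢
        nlinarith
      · have h1' : (1:ℝ) ≤ M := by exact_mod_cast h1
        have hw1 : 1 ≤ w := le_trans h1' hMw
        have hkey : w^2 * (2/((M:ℝ)+1)) ≤ 2*w := by
          rw [mul_comm, div_mul_eq_mul_div, div_le_iff₀ (by positivity)]
          nlinarith
        linarith [hkey, hMw]

set_option maxHeartbeats 1000000 in
lemma var_tsum_le (w : ℝ) (hw : 0 ≤ w) :
    ∑' k : ℕ, ENNReal.ofReal (((k:ℝ)⁻¹)^2 * (min w k)^2) ≤ ENNReal.ofReal (3*w + 2) := by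
  have hnn : ∀ k : ℕ, 0 ≤ ((k:ℝ)⁻¹)^2 * (min w k)^2 := fun k => mul_nonneg (sq_nonneg _) (sq_nonneg _)
  have hsum : Summable (fun k : ℕ => ((k:ℝ)⁻¹)^2 * (min w k)^2) := by
    apply Summable.of_nonneg_of_le hnn (f := fun k : ℕ => w^2 * ((k:ℝ)⁻¹)^2)
    · intro k
      have h2 : (min w (k:ℝ))^2 ≤ w^2 := by
        have := min_le_left w (k:ℝ)
        have h3 : (0:ℝ) ≤ min w k := le_min hw (Nat.cast_nonneg k)
        nlinarith
      calc ((k:ℝ)⁻¹)^2 * (min w k)^2 ≤ ((k:ℝ)⁻¹)^2 * w^2 :=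
            mul_le_mul_of_nonneg_left h2 (by positivity)
      _ = w^2 * ((k:ℝ)⁻¹)^2 := by ring
    · have hs2 : Summable (fun k : ℕ => ((k:ℝ)^2)⁻¹) := by
        exact_mod_cast (Real.summable_nat_pow_inv (p := 2)).mpr one_lt_two
      exact (hs2.congr (fun k => (inv_pow _ _).symm)).mul_left _
  rw [← ENNReal.ofReal_tsum_of_nonneg hnn hsum]
  exact ENNReal.ofReal_le_ofReal (hsum.tsum_le_of_sum_range_le (var_sum_le w hw))

lemma ae_summable_of_tsum_lintegral {Ω : Type*} [MeasurableSpace Ω] {μ : Measure Ω}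
    {F : ℕ → Ω → ℝ} (hFm : ∀ k, AEMeasurable (F k) μ)
    (hFnn : ∀ k ω, 0 ≤ F k ω)
    (h : ∑' k : ℕ, ∫⁻ ω, ENNReal.ofReal ((k:ℝ)⁻¹ * F k ω) ∂μ ≠ ⊤) :
    ∀ᵐ ω ∂μ, Summable (fun k : ℕ => (k:ℝ)⁻¹ * F k ω) := by
  have hm : ∀ k : ℕ, AEMeasurable (fun ω => ENNReal.ofReal ((k:ℝ)⁻¹ * F k ω)) μ :=
    fun k => ENNReal.measurable_ofReal.comp_aemeasurable ((hFm k).const_mul _)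
  rw [← lintegral_tsum hm] at h
  have hae := ae_lt_top' (AEMeasurable.ennreal_tsum hm) h
  filter_upwards [hae] with ω hω
  have hs := ENNReal.summable_toReal hω.ne
  apply hs.congr
  intro k
  rw [ENNReal.toReal_ofReal (mul_nonneg (by positivity) (hFnn k ω))]

end Aux

/-- Lemma 17 (martingale strong law, cf. Hall–Heyde): if `{U_k}` is adapted
to the filtration `{H_k}` and stochastically dominated, up to a constant
`c`, by a random variable `V` with `E[|V| log⁺ |V|] < ∞`, then
`(1/n) ∑_{k=1}^n (U_k - E[U_k | H_{k-1}]) → 0` almost surely. -/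
theorem stmt19 {Ω : Type*} {m0 : MeasurableSpace Ω} (μ : Measure Ω)
    [IsProbabilityMeasure μ]
    (ℋ : Filtration ℕ m0)
    (U : ℕ → Ω → ℝ)
    (hmeas : ∀ k, Measurable (U k))
    (hadapted : ∀ k, 1 ≤ k → StronglyMeasurable[ℋ k] (U k))
    (c : ℝ) (hc : 0 < c)
    (V : Ω → ℝ) (hVmeas : Measurable V)
    (hVint : Integrable (fun ω => |V ω| * max (Real.log |V ω|) 0) μ)
    (hVint' : Integrable V μ)
    (hdom : ∀ k, 1 ≤ k → ∀ x : ℝ, 0 < x →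
      μ {ω | x < |U k ω|} ≤ ENNReal.ofReal c * μ {ω | x < |V ω|}) :
    ∀ᵐ ω ∂μ, Tendsto (fun n : ℕ => (n : ℝ)⁻¹ *
        ∑ k ∈ Finset.Icc 1 n, (U k ω - (μ[U k | ℋ (k - 1)]) ω))
      atTop (nhds 0) := by
  classical
  -- Basic objects
  set T : ℕ → Ω → ℝ := fun k => ProbabilityTheory.truncation (U k) k with hTdef
  set G : ℕ → Ω → ℝ := fun k ω => U k ω - T k ω with hGdef
  set Wf : ℕ → Ω → ℝ := fun k ω => if (k:ℝ)/2 < |V ω| then |V ω| else 0 with hWdef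
  have hTmeas : ∀ k, Measurable (T k) := fun k =>
    (measurable_id.indicator measurableSet_Ioc).comp (hmeas k)
  have hGmeas : ∀ k, Measurable (G k) := fun k => (hmeas k).sub (hTmeas k)
  have hWmeas : ∀ k, Measurable (Wf k) := fun k =>
    Measurable.ite (measurableSet_lt measurable_const hVmeas.abs) hVmeas.abs measurable_const
  have hWnn : ∀ k ω, 0 ≤ Wf k ω := by
    intro k ω
    simp only [hWdef]
    split_ifs with h
    · exact abs_nonneg _
    · exact le_refl 0
  have habsT : ∀ k ω, |T k ω| ≤ |U k ω| := fun k ω =>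
    ProbabilityTheory.abs_truncation_le_abs_self _ _ _
  have hTbdd : ∀ k ω, |T k ω| ≤ (k:ℝ) := fun k ω =>
    (ProbabilityTheory.abs_truncation_le_bound _ _ _).trans
      (le_of_eq (abs_of_nonneg (Nat.cast_nonneg k)))
  have hGzero : ∀ k ω, |U k ω| < k → G k ω = 0 := by
    intro k ω h
    simp only [hGdef, hTdef]
    rw [ProbabilityTheory.truncation_eq_self h]
    ring
  have hGabs : ∀ k ω, |G k ω| ≤ |U k ω| := by
    intro k ω
    by_cases h : U k ω ∈ Set.Ioc (-(k:ℝ)) k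
    · have : T k ω = U k ω := by
        simp only [hTdef, ProbabilityTheory.truncation, Function.comp_apply,
          Set.indicator_of_mem h, id]
      simp [hGdef, this]
    · have : T k ω = 0 := by
        simp only [hTdef, ProbabilityTheory.truncation, Function.comp_apply,
          Set.indicator_of_notMem h]
      simp [hGdef, this]
  -- integrability of the basic objects
  have hfin : ∀ {f : Ω → ℝ}, Integrable f μ → ∫⁻ ω, ENNReal.ofReal |f ω| ∂μ < ⊤ := by
    intro f hf
    have h := (hasFiniteIntegral_iff_norm f).mp hf.2
    simpa [Real.norm_eq_abs] using h
  have hintof : ∀ {f : Ω → ℝ}, AEStronglyMeasurable f μ →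
      ∫⁻ ω, ENNReal.ofReal |f ω| ∂μ < ⊤ → Integrable f μ := by
    intro f hm h
    refine ⟨hm, (hasFiniteIntegral_iff_norm f).mpr ?_⟩
    simpa [Real.norm_eq_abs] using h
  have hVlint : ∫⁻ ω, ENNReal.ofReal |V ω| ∂μ < ⊤ := hfin hVint'
  have hUlint : ∀ k, 1 ≤ k →
      ∫⁻ ω, ENNReal.ofReal |U k ω| ∂μ ≤ ENNReal.ofReal c * ∫⁻ ω, ENNReal.ofReal |V ω| ∂μ := by
    intro k hk
    exact lintegral_le_of_tail_le μ (hmeas k).abs (fun ω => abs_nonneg _) hVmeas.abs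
      (fun ω => abs_nonneg _) (fun t ht => hdom k hk t ht)
  have hUint : ∀ k, 1 ≤ k → Integrable (U k) μ := by
    intro k hk
    refine hintof (hmeas k).aestronglyMeasurable ?_
    exact lt_of_le_of_lt (hUlint k hk)
      (ENNReal.mul_lt_top ENNReal.ofReal_lt_top hVlint)
  have hTint : ∀ k, 1 ≤ k → Integrable (T k) μ := by
    intro k hk
    exact (hUint k hk).mono (hTmeas k).aestronglyMeasurable
      (Filter.Eventually.of_forall fun ω => by
        simpa [Real.norm_eq_abs] using habsT k ω)
  have hGint : ∀ k, 1 ≤ k → Integrable (G k) μ := fun k hk => (hUint k hk).sub (hTint k hk)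
  -- tail estimate for G
  have hGtail : ∀ k, 1 ≤ k → ∀ t : ℝ, 0 < t →
      μ {ω | t < |G k ω|} ≤ ENNReal.ofReal c * μ {ω | t < Wf k ω} := by
    intro k hk t ht
    have hk1 : (1:ℝ) ≤ k := by exact_mod_cast hk
    have hx : 0 < max t ((k:ℝ)/2) := lt_max_of_lt_left ht
    have h1 : {ω | t < |G k ω|} ⊆ {ω | max t ((k:ℝ)/2) < |U k ω|} := by
      intro ω hω
      simp only [Set.mem_setOf_eq] at hω ⊢
      have hGU : |G k ω| ≤ |U k ω| := hGabs k ω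
      have hUk : (k:ℝ) ≤ |U k ω| := by
        by_contra hcon
        push_neg at hcon
        rw [hGzero k ω hcon] at hω
        simp at hω
        linarith
      exact max_lt (lt_of_lt_of_le hω hGU) (lt_of_lt_of_le (by linarith) hUk)
    have h2 : {ω | t < Wf k ω} = {ω | max t ((k:ℝ)/2) < |V ω|} := by
      ext ω
      simp only [Set.mem_setOf_eq, hWdef]
      constructor
      · intro h
        split_ifs at h with hcond
        · exact max_lt h hcond
        · linarith
      · intro h
        have ha := lt_of_le_of_lt (le_max_left t ((k:ℝ)/2)) h
        have hb := lt_of_le_of_lt (le_max_right t ((k:ℝ)/2)) h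
        rw [if_pos hb]
        exact ha
    calc μ {ω | t < |G k ω|} ≤ μ {ω | max t ((k:ℝ)/2) < |U k ω|} := measure_mono h1
    _ ≤ ENNReal.ofReal c * μ {ω | max t ((k:ℝ)/2) < |V ω|} := hdom k hk _ hx
    _ = ENNReal.ofReal c * μ {ω | t < Wf k ω} := by rw [h2]
  have hGlint : ∀ k, 1 ≤ k → ∫⁻ ω, ENNReal.ofReal |G k ω| ∂μ
      ≤ ENNReal.ofReal c * ∫⁻ ω, ENNReal.ofReal (Wf k ω) ∂μ := by
    intro k hk
    exact lintegral_le_of_tail_le μ (hGmeas k).abs (fun ω => abs_nonneg _)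
      (hWmeas k) (hWnn k) (hGtail k hk)
  -- the harmonic-type sum for W
  have hΦint : Integrable (fun ω => |V ω| * (3 + max (Real.log |V ω|) 0)) μ := by
    have h1 : Integrable (fun ω => |V ω| * 3 + |V ω| * max (Real.log |V ω|) 0) μ :=
      (hVint'.abs.mul_const 3).add hVint
    exact h1.congr (Filter.Eventually.of_forall fun ω => by ring)
  have hΦlint : ∫⁻ ω, ENNReal.ofReal (|V ω| * (3 + max (Real.log |V ω|) 0)) ∂μ < ⊤ := by
    have h := hfin hΦint
    refine lt_of_le_of_lt (le_of_eq (lintegral_congr fun ω => ?_)) h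
    have h0 : (0:ℝ) ≤ 3 + max (Real.log |V ω|) 0 := by
      have := le_max_right (Real.log |V ω|) 0
      linarith
    rw [abs_of_nonneg (mul_nonneg (abs_nonneg (V ω)) h0)]
  have hWsum : ∑' k : ℕ, ENNReal.ofReal ((k:ℝ)⁻¹) * ∫⁻ ω, ENNReal.ofReal (Wf k ω) ∂μ
      ≤ ∫⁻ ω, ENNReal.ofReal (|V ω| * (3 + max (Real.log |V ω|) 0)) ∂μ := by
    have hm : ∀ k : ℕ, AEMeasurable (fun ω => ENNReal.ofReal ((k:ℝ)⁻¹ * Wf k ω)) μ :=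
      fun k => ENNReal.measurable_ofReal.comp_aemeasurable
        (((hWmeas k).const_mul _).aemeasurable)
    calc ∑' k : ℕ, ENNReal.ofReal ((k:ℝ)⁻¹) * ∫⁻ ω, ENNReal.ofReal (Wf k ω) ∂μ
        = ∑' k : ℕ, ∫⁻ ω, ENNReal.ofReal ((k:ℝ)⁻¹ * Wf k ω) ∂μ := by
          apply tsum_congr
          intro k
          rw [← lintegral_const_mul' _ _ ENNReal.ofReal_ne_top]
          apply lintegral_congr
          intro ω
          rw [ENNReal.ofReal_mul (by positivity)]
    _ = ∫⁻ ω, ∑' k : ℕ, ENNReal.ofReal ((k:ℝ)⁻¹ * Wf k ω) ∂μ := (lintegral_tsum hm).symm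
    _ ≤ ∫⁻ ω, ENNReal.ofReal (|V ω| * (3 + max (Real.log |V ω|) 0)) ∂μ := by
          apply lintegral_mono
          intro ω
          simpa only [hWdef] using harmonic_tsum_le (|V ω|) (abs_nonneg _)
  -- a.e. summability for the G-part and its conditional expectations
  have hgen : ∀ (F : ℕ → Ω → ℝ), (∀ k, AEMeasurable (F k) μ) → (∀ k ω, 0 ≤ F k ω) →
      (∀ k, 1 ≤ k → ∫⁻ ω, ENNReal.ofReal (F k ω) ∂μ
        ≤ ENNReal.ofReal c * ∫⁻ ω, ENNReal.ofReal (Wf k ω) ∂μ) →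
      ∀ᵐ ω ∂μ, Summable (fun k : ℕ => (k:ℝ)⁻¹ * F k ω) := by
    intro F hFm hFnn hFle
    apply ae_summable_of_tsum_lintegral hFm hFnn
    have hterm : ∀ k : ℕ, ∫⁻ ω, ENNReal.ofReal ((k:ℝ)⁻¹ * F k ω) ∂μ
        ≤ ENNReal.ofReal c *
          (ENNReal.ofReal ((k:ℝ)⁻¹) * ∫⁻ ω, ENNReal.ofReal (Wf k ω) ∂μ) := by
      intro k
      have heq : ∫⁻ ω, ENNReal.ofReal ((k:ℝ)⁻¹ * F k ω) ∂μ
          = ENNReal.ofReal ((k:ℝ)⁻¹) * ∫⁻ ω, ENNReal.ofReal (F k ω) ∂μ := by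
        rw [← lintegral_const_mul' _ _ ENNReal.ofReal_ne_top]
        exact lintegral_congr fun ω => by rw [ENNReal.ofReal_mul (by positivity)]
      rcases Nat.eq_zero_or_pos k with h0 | h1
      · subst h0
        rw [heq]
        simp
      · rw [heq, mul_left_comm]
        exact mul_le_mul_right (hFle k h1) _
    have h1 : ∑' k : ℕ, ∫⁻ ω, ENNReal.ofReal ((k:ℝ)⁻¹ * F k ω) ∂μ
        ≤ ENNReal.ofReal c * ∫⁻ ω, ENNReal.ofReal (|V ω| * (3 + max (Real.log |V ω|) 0)) ∂μ := by
      refine le_trans (ENNReal.tsum_le_tsum hterm) ?_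
      rw [ENNReal.tsum_mul_left]
      exact mul_le_mul_right hWsum _
    exact ne_of_lt (lt_of_le_of_lt h1 (ENNReal.mul_lt_top ENNReal.ofReal_lt_top hΦlint))
  have hsumG : ∀ᵐ ω ∂μ, Summable (fun k : ℕ => (k:ℝ)⁻¹ * |G k ω|) := by
    apply hgen
    · exact fun k => (hGmeas k).abs.aemeasurable
    · exact fun k ω => abs_nonneg _
    · exact fun k hk => hGlint k hk
  have hsumcG : ∀ᵐ ω ∂μ, Summable (fun k : ℕ => (k:ℝ)⁻¹ * |(μ[G k | ℋ (k-1)]) ω|) := by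
    apply hgen
    · exact fun k => ((stronglyMeasurable_condExp.mono (ℋ.le (k-1))).measurable).abs.aemeasurable
    · exact fun k ω => abs_nonneg _
    · intro k hk
      refine le_trans ?_ (hGlint k hk)
      rw [← ofReal_integral_eq_lintegral_ofReal (integrable_condExp.abs)
          (Filter.Eventually.of_forall fun ω => abs_nonneg _),
        ← ofReal_integral_eq_lintegral_ofReal ((hGint k hk).abs)
          (Filter.Eventually.of_forall fun ω => abs_nonneg _)]
      exact ENNReal.ofReal_le_ofReal (integral_abs_condExp_le _)
  have hA : ∀ᵐ ω ∂μ, Tendsto (fun n : ℕ => (n:ℝ)⁻¹ *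
      ∑ k ∈ Finset.Icc 1 n, (G k ω - (μ[G k | ℋ (k-1)]) ω)) atTop (nhds 0) := by
    filter_upwards [hsumG, hsumcG] with ω h1 h2
    apply kron_of_summable
    apply Summable.of_abs
    apply Summable.of_nonneg_of_le (fun k => abs_nonneg _)
      (f := fun k : ℕ => (k:ℝ)⁻¹ * |G k ω| + (k:ℝ)⁻¹ * |(μ[G k | ℋ (k-1)]) ω|)
    · intro k
      have hk0 : (0:ℝ) ≤ (k:ℝ)⁻¹ := by positivity
      rw [div_eq_mul_inv, abs_mul, abs_inv, Nat.abs_cast, mul_comm]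
      calc (k:ℝ)⁻¹ * |G k ω - (μ[G k | ℋ (k-1)]) ω|
          ≤ (k:ℝ)⁻¹ * (|G k ω| + |(μ[G k | ℋ (k-1)]) ω|) := by
            apply mul_le_mul_of_nonneg_left (abs_sub _ _) hk0
      _ = (k:ℝ)⁻¹ * |G k ω| + (k:ℝ)⁻¹ * |(μ[G k | ℋ (k-1)]) ω| := by ring
    · exact h1.add h2
  -- the martingale part
  have hB : ∀ᵐ ω ∂μ, Tendsto (fun n : ℕ => (n:ℝ)⁻¹ *
      ∑ k ∈ Finset.Icc 1 n, (T k ω - (μ[T k | ℋ (k-1)]) ω)) atTop (nhds 0) := by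
    set d : ℕ → Ω → ℝ := fun k => ((k:ℝ)⁻¹) • (T k - μ[T k | ℋ (k-1)]) with hddef
    set Mn : ℕ → Ω → ℝ := fun n => ∑ k ∈ Finset.Icc 1 n, d k with hMdef
    have hdapp : ∀ k ω, d k ω = (k:ℝ)⁻¹ * (T k ω - (μ[T k | ℋ (k-1)]) ω) := by
      intro k ω; simp [hddef]
    have hd0 : d 0 = 0 := by
      funext ω; rw [hdapp]; simp
    have hMapp : ∀ n ω, Mn n ω = ∑ k ∈ Finset.Icc 1 n, d k ω := by
      intro n ω
      simp only [hMdef, Finset.sum_apply]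
    have hMfun : ∀ n, Mn n = fun ω => ∑ k ∈ Finset.Icc 1 n, d k ω := fun n =>
      funext fun ω => hMapp n ω
    have hTsm : ∀ k, 1 ≤ k → StronglyMeasurable[ℋ k] (T k) := fun k hk =>
      ((measurable_id.indicator measurableSet_Ioc).comp
        (hadapted k hk).measurable).stronglyMeasurable
    have hdsm : ∀ k, 1 ≤ k → StronglyMeasurable[ℋ k] (d k) := fun k hk =>
      (((hTsm k hk).sub (stronglyMeasurable_condExp.mono
        (ℋ.mono (Nat.sub_le k 1)))).const_smul _)
    have hdint : ∀ k, Integrable (d k) μ := by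
      intro k
      rcases Nat.eq_zero_or_pos k with h0 | h1
      · subst h0; rw [hd0]; exact integrable_zero _ _ _
      · exact ((hTint k h1).sub integrable_condExp).smul _
    have hMadp : StronglyAdapted ℋ Mn := by
      intro n
      rw [hMfun n]
      apply Finset.stronglyMeasurable_fun_sum
      intro k hk
      have hk' := Finset.mem_Icc.mp hk
      exact (hdsm k hk'.1).mono (ℋ.mono hk'.2)
    have hMint : ∀ n, Integrable (Mn n) μ := by
      intro n
      rw [hMfun n]
      exact integrable_finset_sum _ fun k _ => hdint k
    have hdcond : ∀ k, 1 ≤ k → μ[d k | ℋ (k-1)] =ᵐ[μ] 0 := by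
      intro k hk
      have h1 : μ[d k | ℋ (k-1)] =ᵐ[μ]
          (k:ℝ)⁻¹ • μ[T k - μ[T k | ℋ (k-1)] | ℋ (k-1)] := by
        simp only [hddef]
        exact condExp_smul _ _ _
      have h3 : μ[μ[T k | ℋ (k-1)] | ℋ (k-1)] = μ[T k | ℋ (k-1)] :=
        condExp_of_stronglyMeasurable (ℋ.le (k-1)) stronglyMeasurable_condExp integrable_condExp
      have h2 : μ[T k - μ[T k | ℋ (k-1)] | ℋ (k-1)]
          =ᵐ[μ] μ[T k | ℋ (k-1)] - μ[T k | ℋ (k-1)] := by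
        have h4 : μ[T k - μ[T k | ℋ (k-1)] | ℋ (k-1)]
            =ᵐ[μ] μ[T k | ℋ (k-1)] - μ[μ[T k | ℋ (k-1)] | ℋ (k-1)] :=
          condExp_sub (hTint k hk) integrable_condExp _
        rwa [h3] at h4
      refine h1.trans ?_
      refine (h2.const_smul ((k:ℝ)⁻¹)).trans ?_
      apply Filter.EventuallyEq.of_eq
      funext ω
      simp
    have hmart : Martingale Mn ℋ μ := by
      refine ⟨hMadp, ?_⟩
      intro i j hij
      have hzero : ∀ k, 1 ≤ k → i < k → μ[d k | ℋ i] =ᵐ[μ] 0 := by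
        intro k hk hik
        have h1 : ℋ i ≤ ℋ (k-1) := ℋ.mono (by omega)
        have h2 : μ[d k | ℋ i] =ᵐ[μ] μ[μ[d k | ℋ (k-1)] | ℋ i] :=
          (condExp_condExp_of_le h1 (ℋ.le (k-1))).symm
        refine h2.trans ?_
        refine (condExp_congr_ae (hdcond k hk)).trans ?_
        rw [condExp_zero]
      have heq : ∀ k, 1 ≤ k → k ≤ i → μ[d k | ℋ i] = d k := fun k hk hki =>
        condExp_of_stronglyMeasurable (ℋ.le i) ((hdsm k hk).mono (ℋ.mono hki)) (hdint k)
      have hall : ∀ᵐ ω ∂μ, ∀ k : ℕ, k ∈ Finset.Icc 1 j →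
          (μ[d k | ℋ i]) ω = (if k ≤ i then d k ω else 0) := by
        rw [ae_all_iff]
        intro k
        by_cases hkm : k ∈ Finset.Icc 1 j
        · have hk1 := (Finset.mem_Icc.mp hkm).1
          by_cases hki : k ≤ i
          · refine Filter.Eventually.of_forall fun ω _ => ?_
            rw [heq k hk1 hki, if_pos hki]
          · filter_upwards [hzero k hk1 (by omega)] with ω hω
            intro _
            rw [if_neg hki]
            simpa using hω
        · exact Filter.Eventually.of_forall fun ω h => absurd h hkm
      have hcsum : μ[∑ k ∈ Finset.Icc 1 j, d k | ℋ i]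
          =ᵐ[μ] ∑ k ∈ Finset.Icc 1 j, μ[d k | ℋ i] :=
        condExp_finset_sum (fun k _ => hdint k) _
      refine hcsum.trans ?_
      filter_upwards [hall] with ω hω
      rw [Finset.sum_apply]
      calc ∑ k ∈ Finset.Icc 1 j, (μ[d k | ℋ i]) ω
          = ∑ k ∈ Finset.Icc 1 j, (if k ≤ i then d k ω else 0) := Finset.sum_congr rfl hω
        _ = ∑ k ∈ (Finset.Icc 1 j).filter (fun k => k ≤ i), d k ω :=
            (Finset.sum_filter _ _).symm
        _ = ∑ k ∈ Finset.Icc 1 i, d k ω := by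
            apply Finset.sum_congr _ (fun _ _ => rfl)
            ext k
            simp only [Finset.mem_filter, Finset.mem_Icc]
            omega
        _ = Mn i ω := (Finset.sum_apply _ _ _).symm
    have hsubm := hmart.submartingale
    -- bounds
    have hcTbdd : ∀ k : ℕ, ∀ᵐ ω ∂μ, |(μ[T k | ℋ (k-1)]) ω| ≤ (k:ℝ) := by
      intro k
      have h : ∀ᵐ ω ∂μ, |(μ[T k | ℋ (k-1)]) ω| ≤ ((k : ℝ≥0) : ℝ) :=
        ae_bdd_condExp_of_ae_bdd
          (Filter.Eventually.of_forall fun ω => by simpa using hTbdd k ω)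
      simpa using h
    have hdbdd : ∀ k : ℕ, ∀ᵐ ω ∂μ, |d k ω| ≤ 2 := by
      intro k
      rcases Nat.eq_zero_or_pos k with h0 | h1
      · subst h0
        rw [hd0]
        exact Filter.Eventually.of_forall (by norm_num)
      · have hk1 : (1:ℝ) ≤ k := by exact_mod_cast h1
        filter_upwards [hcTbdd k] with ω hω
        rw [hdapp, abs_mul, abs_inv, Nat.abs_cast]
        have h2 : |T k ω - (μ[T k | ℋ (k-1)]) ω| ≤ 2 * k := by
          have ha := hTbdd k ω
          have hb := abs_sub (T k ω) ((μ[T k | ℋ (k-1)]) ω)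
          linarith
        calc (k:ℝ)⁻¹ * |T k ω - (μ[T k | ℋ (k-1)]) ω| ≤ (k:ℝ)⁻¹ * (2*k) := by
              apply mul_le_mul_of_nonneg_left h2 (by positivity)
        _ = 2 := by field_simp
    have hMbdd : ∀ n : ℕ, ∀ᵐ ω ∂μ, |Mn n ω| ≤ 2 * n := by
      intro n
      filter_upwards [ae_all_iff.mpr hdbdd] with ω hω
      calc |Mn n ω| = |∑ k ∈ Finset.Icc 1 n, d k ω| := by rw [hMapp n ω]
      _ ≤ ∑ k ∈ Finset.Icc 1 n, |d k ω| := Finset.abs_sum_le_sum_abs _ _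
      _ ≤ ∑ k ∈ Finset.Icc 1 n, 2 := Finset.sum_le_sum fun k _ => hω k
      _ = 2 * n := by
          rw [Finset.sum_const, Nat.card_Icc]
          simp [mul_comm]
    have hMd : ∀ n : ℕ, Integrable (fun ω => Mn n ω * d (n+1) ω) μ := fun n =>
      (hdint (n+1)).bdd_mul ((hMint n).aestronglyMeasurable)
        (by filter_upwards [hMbdd n] with ω h; rwa [Real.norm_eq_abs])
    have hM2 : ∀ n : ℕ, Integrable (fun ω => Mn n ω * Mn n ω) μ := fun n =>
      (hMint n).bdd_mul ((hMint n).aestronglyMeasurable)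
        (by filter_upwards [hMbdd n] with ω h; rwa [Real.norm_eq_abs])
    have hd2i : ∀ k : ℕ, Integrable (fun ω => d k ω * d k ω) μ := fun k =>
      (hdint k).bdd_mul ((hdint k).aestronglyMeasurable)
        (by filter_upwards [hdbdd k] with ω h; rwa [Real.norm_eq_abs])
    have hTT : ∀ k, 1 ≤ k → Integrable (fun ω => T k ω * T k ω) μ := fun k hk =>
      (hTint k hk).bdd_mul (hTmeas k).aestronglyMeasurable
        (Filter.Eventually.of_forall fun ω => by rw [Real.norm_eq_abs]; exact hTbdd k ω)
    -- orthogonality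
    have horth : ∀ n : ℕ, ∫ ω, Mn n ω * d (n+1) ω ∂μ = 0 := by
      intro n
      have hsm : StronglyMeasurable[ℋ n] (Mn n) := hMadp n
      have hprod := condExp_mul_of_stronglyMeasurable_left (m := ℋ n) hsm (hMd n) (hdint (n+1))
      have hz : μ[d (n+1) | ℋ n] =ᵐ[μ] 0 := by
        have := hdcond (n+1) (by omega)
        simpa using this
      calc ∫ ω, Mn n ω * d (n+1) ω ∂μ
          = ∫ ω, (μ[Mn n * d (n+1) | ℋ n]) ω ∂μ := (integral_condExp (ℋ.le n)).symm
        _ = ∫ ω, (Mn n * μ[d (n+1) | ℋ n]) ω ∂μ := integral_congr_ae hprod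
        _ = ∫ ω, (Mn n ω * (0:ℝ)) ∂μ := by
            apply integral_congr_ae
            filter_upwards [hz] with ω h
            simp only [Pi.mul_apply]
            rw [h]
            simp
        _ = 0 := by simp
    -- second moment of d
    have hd2 : ∀ k, 1 ≤ k → ∫ ω, d k ω * d k ω ∂μ
        ≤ ((k:ℝ)⁻¹)^2 * ∫ ω, T k ω * T k ω ∂μ := by
      intro k hk
      have hcTaesm : AEStronglyMeasurable (μ[T k | ℋ (k-1)]) μ :=
        (stronglyMeasurable_condExp.mono (ℋ.le (k-1))).aestronglyMeasurable
      have hST' : Integrable (fun ω => (μ[T k | ℋ (k-1)]) ω * T k ω) μ :=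
        (hTint k hk).bdd_mul hcTaesm
          (by filter_upwards [hcTbdd k] with ω h; rwa [Real.norm_eq_abs])
      have hSS : Integrable (fun ω => (μ[T k | ℋ (k-1)]) ω * (μ[T k | ℋ (k-1)]) ω) μ :=
        integrable_condExp.bdd_mul hcTaesm
          (by filter_upwards [hcTbdd k] with ω h; rwa [Real.norm_eq_abs])
      have hSTeq : ∫ ω, (μ[T k | ℋ (k-1)]) ω * T k ω ∂μ
          = ∫ ω, (μ[T k | ℋ (k-1)]) ω * (μ[T k | ℋ (k-1)]) ω ∂μ := by
        have hprod := condExp_mul_of_stronglyMeasurable_left (m := ℋ (k-1))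
          (stronglyMeasurable_condExp (f := T k)) hST' (hTint k hk)
        calc ∫ ω, (μ[T k | ℋ (k-1)]) ω * T k ω ∂μ
            = ∫ ω, (μ[(μ[T k | ℋ (k-1)]) * T k | ℋ (k-1)]) ω ∂μ :=
              (integral_condExp (ℋ.le (k-1))).symm
          _ = ∫ ω, ((μ[T k | ℋ (k-1)]) * μ[T k | ℋ (k-1)]) ω ∂μ := integral_congr_ae hprod
          _ = _ := by simp only [Pi.mul_apply]
      have hexp : ∀ ω, d k ω * d k ω = ((k:ℝ)⁻¹)^2 *
          (T k ω * T k ω - 2 * ((μ[T k | ℋ (k-1)]) ω * T k ω)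
            + (μ[T k | ℋ (k-1)]) ω * (μ[T k | ℋ (k-1)]) ω) := by
        intro ω; rw [hdapp]; ring
      have e0 : ∫ ω, d k ω * d k ω ∂μ = ((k:ℝ)⁻¹)^2 *
          ∫ ω, (T k ω * T k ω - 2 * ((μ[T k | ℋ (k-1)]) ω * T k ω)
            + (μ[T k | ℋ (k-1)]) ω * (μ[T k | ℋ (k-1)]) ω) ∂μ := by
        rw [← integral_const_mul]
        exact integral_congr_ae (Filter.Eventually.of_forall hexp)
      have e1 : ∫ ω, (T k ω * T k ω - 2 * ((μ[T k | ℋ (k-1)]) ω * T k ω)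
            + (μ[T k | ℋ (k-1)]) ω * (μ[T k | ℋ (k-1)]) ω) ∂μ
          = (∫ ω, T k ω * T k ω ∂μ) - 2 * (∫ ω, (μ[T k | ℋ (k-1)]) ω * T k ω ∂μ)
            + ∫ ω, (μ[T k | ℋ (k-1)]) ω * (μ[T k | ℋ (k-1)]) ω ∂μ := by
        have hsub : Integrable (fun ω => T k ω * T k ω
            - 2 * ((μ[T k | ℋ (k-1)]) ω * T k ω)) μ := (hTT k hk).sub (hST'.const_mul 2)
        rw [integral_add hsub hSS, integral_sub (hTT k hk) (hST'.const_mul 2),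
          integral_const_mul]
      have hSSnn : 0 ≤ ∫ ω, (μ[T k | ℋ (k-1)]) ω * (μ[T k | ℋ (k-1)]) ω ∂μ :=
        integral_nonneg fun ω => mul_self_nonneg _
      rw [e0, e1, hSTeq]
      have hsq : (0:ℝ) ≤ ((k:ℝ)⁻¹)^2 := sq_nonneg _
      nlinarith [hSSnn]
    -- second moment of Mn
    have hE2 : ∀ n : ℕ, ∫ ω, Mn n ω * Mn n ω ∂μ
        = ∑ k ∈ Finset.Icc 1 n, ∫ ω, d k ω * d k ω ∂μ := by
      intro n
      induction n with
      | zero =>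
        have : ∀ ω, Mn 0 ω = 0 := fun ω => by rw [hMapp 0 ω]; simp
        simp [this]
      | succ n ih =>
        have hstep : ∀ ω, Mn (n+1) ω = Mn n ω + d (n+1) ω := by
          intro ω
          rw [hMapp (n+1) ω, hMapp n ω,
            Finset.sum_Icc_succ_top (by omega : (1:ℕ) ≤ n+1)]
        calc ∫ ω, Mn (n+1) ω * Mn (n+1) ω ∂μ
            = ∫ ω, (Mn n ω * Mn n ω + (2 * (Mn n ω * d (n+1) ω)
                + d (n+1) ω * d (n+1) ω)) ∂μ := by
              apply integral_congr_ae (Filter.Eventually.of_forall fun ω => ?_)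
              rw [hstep ω]; ring
          _ = (∫ ω, Mn n ω * Mn n ω ∂μ) + (2 * ∫ ω, Mn n ω * d (n+1) ω ∂μ
                + ∫ ω, d (n+1) ω * d (n+1) ω ∂μ) := by
              have hadd : Integrable (fun ω => 2 * (Mn n ω * d (n+1) ω)
                  + d (n+1) ω * d (n+1) ω) μ := ((hMd n).const_mul 2).add (hd2i (n+1))
              rw [integral_add (hM2 n) hadd,
                integral_add ((hMd n).const_mul 2) (hd2i (n+1)), integral_const_mul]
          _ = ∑ k ∈ Finset.Icc 1 (n+1), ∫ ω, d k ω * d k ω ∂μ := by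
              rw [horth n, ih, Finset.sum_Icc_succ_top (by omega : (1:ℕ) ≤ n+1)]
              ring
    -- tail comparison for truncated squares
    have hqtail : ∀ k, 1 ≤ k → ∀ t : ℝ, 0 < t →
        μ {ω | t < (min |U k ω| k)^2} ≤ ENNReal.ofReal c * μ {ω | t < (min |V ω| k)^2} := by
      intro k hk t ht
      have hs : 0 < Real.sqrt t := Real.sqrt_pos.mpr ht
      have key : ∀ x : ℝ, 0 ≤ x →
          (t < (min x k)^2 ↔ (Real.sqrt t < x ∧ Real.sqrt t < k)) := by
        intro x hx
        have hm : (0:ℝ) ≤ min x k := le_min hx (Nat.cast_nonneg k)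
        constructor
        · intro h
          have hm0 : (0:ℝ) < min x k := by nlinarith
          exact lt_min_iff.mp ((Real.sqrt_lt' hm0).mpr h)
        · rintro ⟨h1', h2'⟩
          have hmin : Real.sqrt t < min x k := lt_min_iff.mpr ⟨h1', h2'⟩
          exact (Real.sqrt_lt' (hs.trans hmin)).mp hmin
      by_cases hsk : Real.sqrt t < (k:ℝ)
      · have e1 : {ω | t < (min |U k ω| (k:ℝ))^2} = {ω | Real.sqrt t < |U k ω|} := by
          ext ω
          simp only [Set.mem_setOf_eq, key _ (abs_nonneg _)]
          exact and_iff_left hsk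
        have e2 : {ω | t < (min |V ω| (k:ℝ))^2} = {ω | Real.sqrt t < |V ω|} := by
          ext ω
          simp only [Set.mem_setOf_eq, key _ (abs_nonneg _)]
          exact and_iff_left hsk
        rw [e1, e2]
        exact hdom k hk _ hs
      · have e1 : {ω | t < (min |U k ω| (k:ℝ))^2} = ∅ := by
          ext ω
          simp only [Set.mem_setOf_eq, key _ (abs_nonneg _), Set.mem_empty_iff_false, iff_false]
          tauto
        rw [e1]
        simp
    have hq : ∀ k, 1 ≤ k → ∫⁻ ω, ENNReal.ofReal (T k ω * T k ω) ∂μ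
        ≤ ENNReal.ofReal c * ∫⁻ ω, ENNReal.ofReal ((min |V ω| k)^2) ∂μ := by
      intro k hk
      have hstep : ∫⁻ ω, ENNReal.ofReal (T k ω * T k ω) ∂μ
          ≤ ∫⁻ ω, ENNReal.ofReal ((min |U k ω| k)^2) ∂μ := by
        apply lintegral_mono
        intro ω
        apply ENNReal.ofReal_le_ofReal
        have h1 : |T k ω| ≤ min |U k ω| (k:ℝ) := le_min (habsT k ω) (hTbdd k ω)
        have h2 : T k ω * T k ω = |T k ω| * |T k ω| := (abs_mul_abs_self _).symm
        rw [h2, pow_two]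
        exact mul_le_mul h1 h1 (abs_nonneg _) ((abs_nonneg _).trans h1)
      refine hstep.trans (lintegral_le_of_tail_le μ ?_ ?_ ?_ ?_ (hqtail k hk))
      · exact ((hmeas k).abs.min measurable_const).pow_const 2
      · exact fun ω => sq_nonneg _
      · exact (hVmeas.abs.min measurable_const).pow_const 2
      · exact fun ω => sq_nonneg _
    -- the variance series
    have hq2int : Integrable (fun ω => 3*|V ω| + 2) μ :=
      (hVint'.abs.const_mul 3).add (integrable_const 2)
    have hq2lint : ∫⁻ ω, ENNReal.ofReal (3*|V ω| + 2) ∂μ < ⊤ := by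
      have h := hfin hq2int
      refine lt_of_le_of_lt (le_of_eq (lintegral_congr fun ω => ?_)) h
      rw [abs_of_nonneg (show (0:ℝ) ≤ 3*|V ω| + 2 by positivity)]
    have hVarSum : ∑' k : ℕ, ENNReal.ofReal (((k:ℝ)⁻¹)^2)
          * ∫⁻ ω, ENNReal.ofReal ((min |V ω| k)^2) ∂μ
        ≤ ∫⁻ ω, ENNReal.ofReal (3*|V ω| + 2) ∂μ := by
      have hm : ∀ k : ℕ, AEMeasurable
          (fun ω => ENNReal.ofReal (((k:ℝ)⁻¹)^2 * (min |V ω| k)^2)) μ := fun k =>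
        ENNReal.measurable_ofReal.comp_aemeasurable
          ((((hVmeas.abs.min measurable_const).pow_const 2).const_mul _).aemeasurable)
      calc ∑' k : ℕ, ENNReal.ofReal (((k:ℝ)⁻¹)^2)
            * ∫⁻ ω, ENNReal.ofReal ((min |V ω| k)^2) ∂μ
          = ∑' k : ℕ, ∫⁻ ω, ENNReal.ofReal (((k:ℝ)⁻¹)^2 * (min |V ω| k)^2) ∂μ := by
            apply tsum_congr
            intro k
            rw [← lintegral_const_mul' _ _ ENNReal.ofReal_ne_top]
            exact lintegral_congr fun ω => by rw [ENNReal.ofReal_mul (by positivity)]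
        _ = ∫⁻ ω, ∑' k : ℕ, ENNReal.ofReal (((k:ℝ)⁻¹)^2 * (min |V ω| k)^2) ∂μ :=
            (lintegral_tsum hm).symm
        _ ≤ ∫⁻ ω, ENNReal.ofReal (3*|V ω| + 2) ∂μ :=
            lintegral_mono fun ω => var_tsum_le (|V ω|) (abs_nonneg _)
    -- the L¹ bound
    have hKbound : ∀ n, ENNReal.ofReal (∫ ω, Mn n ω * Mn n ω ∂μ)
        ≤ ENNReal.ofReal c * ∫⁻ ω, ENNReal.ofReal (3*|V ω| + 2) ∂μ := by
      intro n
      have hterm : ∀ k ∈ Finset.Icc 1 n, ENNReal.ofReal (∫ ω, d k ω * d k ω ∂μ)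
          ≤ ENNReal.ofReal c * (ENNReal.ofReal (((k:ℝ)⁻¹)^2)
            * ∫⁻ ω, ENNReal.ofReal ((min |V ω| k)^2) ∂μ) := by
        intro k hk
        have hk1 := (Finset.mem_Icc.mp hk).1
        calc ENNReal.ofReal (∫ ω, d k ω * d k ω ∂μ)
            ≤ ENNReal.ofReal (((k:ℝ)⁻¹)^2 * ∫ ω, T k ω * T k ω ∂μ) :=
              ENNReal.ofReal_le_ofReal (hd2 k hk1)
          _ = ENNReal.ofReal (((k:ℝ)⁻¹)^2) * ENNReal.ofReal (∫ ω, T k ω * T k ω ∂μ) :=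
              ENNReal.ofReal_mul (by positivity)
          _ = ENNReal.ofReal (((k:ℝ)⁻¹)^2) * ∫⁻ ω, ENNReal.ofReal (T k ω * T k ω) ∂μ := by
              rw [ofReal_integral_eq_lintegral_ofReal (hTT k hk1)
                (Filter.Eventually.of_forall fun ω => mul_self_nonneg _)]
          _ ≤ ENNReal.ofReal (((k:ℝ)⁻¹)^2) * (ENNReal.ofReal c
              * ∫⁻ ω, ENNReal.ofReal ((min |V ω| k)^2) ∂μ) := mul_le_mul_right (hq k hk1) _
          _ = ENNReal.ofReal c * (ENNReal.ofReal (((k:ℝ)⁻¹)^2)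
              * ∫⁻ ω, ENNReal.ofReal ((min |V ω| k)^2) ∂μ) := by ring
      calc ENNReal.ofReal (∫ ω, Mn n ω * Mn n ω ∂μ)
          = ENNReal.ofReal (∑ k ∈ Finset.Icc 1 n, ∫ ω, d k ω * d k ω ∂μ) := by rw [hE2 n]
        _ = ∑ k ∈ Finset.Icc 1 n, ENNReal.ofReal (∫ ω, d k ω * d k ω ∂μ) :=
            ENNReal.ofReal_sum_of_nonneg fun k _ => integral_nonneg fun ω => mul_self_nonneg _
        _ ≤ ∑ k ∈ Finset.Icc 1 n, ENNReal.ofReal c * (ENNReal.ofReal (((k:ℝ)⁻¹)^2)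
              * ∫⁻ ω, ENNReal.ofReal ((min |V ω| k)^2) ∂μ) := Finset.sum_le_sum hterm
        _ ≤ ∑' k : ℕ, ENNReal.ofReal c * (ENNReal.ofReal (((k:ℝ)⁻¹)^2)
              * ∫⁻ ω, ENNReal.ofReal ((min |V ω| k)^2) ∂μ) := ENNReal.sum_le_tsum _
        _ = ENNReal.ofReal c * ∑' k : ℕ, (ENNReal.ofReal (((k:ℝ)⁻¹)^2)
              * ∫⁻ ω, ENNReal.ofReal ((min |V ω| k)^2) ∂μ) := ENNReal.tsum_mul_left
        _ ≤ ENNReal.ofReal c * ∫⁻ ω, ENNReal.ofReal (3*|V ω| + 2) ∂μ :=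
            mul_le_mul_right hVarSum _
    set K : ℝ≥0∞ := ENNReal.ofReal c * ∫⁻ ω, ENNReal.ofReal (3*|V ω| + 2) ∂μ with hKdef
    have hKfin : K ≠ ⊤ := by
      rw [hKdef]
      exact (ENNReal.mul_lt_top ENNReal.ofReal_lt_top hq2lint).ne
    have hL1 : ∀ n, eLpNorm (Mn n) 1 μ ≤ K + 1 := by
      intro n
      rw [eLpNorm_one_eq_lintegral_enorm]
      calc ∫⁻ ω, (‖Mn n ω‖₊ : ℝ≥0∞) ∂μ = ∫⁻ ω, ENNReal.ofReal |Mn n ω| ∂μ :=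
            lintegral_congr fun ω => Real.enorm_eq_ofReal_abs _
        _ ≤ ∫⁻ ω, (ENNReal.ofReal (Mn n ω * Mn n ω) + 1) ∂μ := by
            apply lintegral_mono
            intro ω
            calc ENNReal.ofReal |Mn n ω| ≤ ENNReal.ofReal (Mn n ω * Mn n ω + 1) :=
                  ENNReal.ofReal_le_ofReal
                    (by nlinarith [sq_nonneg (|Mn n ω| - 1), sq_abs (Mn n ω)])
              _ ≤ ENNReal.ofReal (Mn n ω * Mn n ω) + ENNReal.ofReal 1 := ENNReal.ofReal_add_le
              _ = ENNReal.ofReal (Mn n ω * Mn n ω) + 1 := by rw [ENNReal.ofReal_one]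
        _ = (∫⁻ ω, ENNReal.ofReal (Mn n ω * Mn n ω) ∂μ) + 1 := by
            rw [lintegral_add_right _ measurable_const, lintegral_one, measure_univ]
        _ ≤ K + 1 := by
            gcongr
            rw [← ofReal_integral_eq_lintegral_ofReal (hM2 n)
              (Filter.Eventually.of_forall fun ω => mul_self_nonneg _)]
            exact hKbound n
    have hRb : ∀ n, eLpNorm (Mn n) 1 μ ≤ ((K+1).toNNReal : ℝ≥0∞) := by
      intro n
      rw [ENNReal.coe_toNNReal (by simp [hKfin])]
      exact hL1 n
    have hconv := hsubm.exists_ae_tendsto_of_bdd hRb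
    filter_upwards [hconv] with ω hω
    obtain ⟨l, hl⟩ := hω
    apply kron (l := l)
    apply hl.congr
    intro n
    rw [hMapp n ω]
    apply Finset.sum_congr rfl
    intro k _
    rw [hdapp]
    exact (div_eq_inv_mul _ _).symm
  -- conditional expectation splits
  have hsplit : ∀ᵐ ω ∂μ, ∀ k : ℕ, 1 ≤ k →
      (μ[U k | ℋ (k-1)]) ω = (μ[T k | ℋ (k-1)]) ω + (μ[G k | ℋ (k-1)]) ω := by
    rw [ae_all_iff]
    intro k
    by_cases hk : 1 ≤ k
    · have hU : U k = T k + G k := by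
        funext ω; simp [hGdef]
      have h := condExp_add (m := ℋ (k-1)) (μ := μ) (hTint k hk) (hGint k hk)
      rw [← hU] at h
      filter_upwards [h] with ω hω
      intro _
      simpa using hω
    · exact Filter.Eventually.of_forall fun ω h => absurd h hk
  -- combine everything
  filter_upwards [hA, hB, hsplit] with ω hAω hBω hsω
  have h := hBω.add hAω
  rw [add_zero] at h
  apply h.congr
  intro n
  rw [← mul_add, ← Finset.sum_add_distrib]
  congr 1
  apply Finset.sum_congr rfl
  intro k hk
  have hk1 : 1 ≤ k := (Finset.mem_Icc.mp hk).1
  rw [hsω k hk1]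
  simp only [hGdef]
  ring
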